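/- The upper bounds Σ_{j=0}^{k−1} r_{i,j} are nonincreasing as the scan proceeds: for every 0 ≤ i < n and every k ≥ 1, Σ_{j=0}^{k−1} r_{i+1,j} ≤ Σ_{j=0}^{k−1} r_{i,j}. -/

import Mathlib

open Finset
open scoped Classical

/-- Poisson-binomial probability of exactly `j` successes among independent
events indexed by `A`, with success probabilities `q`. -/
noncomputable def PB {α : Type*} [DecidableEq α] (A : Finset α) (q : α → ℝ) (j : ℕ) : ℝ :=
  ∑ T ∈ A.powersetCard j, (∏ a ∈ T, q a) * ∏ a ∈ A \ T, (1 - q a)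

/-- Probability of a possible world `S` of the full x-Relation. -/
noncomputable def worldProb {n m : ℕ} (g : Fin n → Fin m) (p : Fin n → ℝ)
    (S : Finset (Fin n)) : ℝ :=
  (∏ t ∈ S, p t) *
    ∏ a ∈ Finset.univ.filter (fun a : Fin m => ∀ t ∈ S, g t ≠ a),
      (1 - ∑ t ∈ Finset.univ.filter (fun t : Fin n => g t = a), p t)

/-- `rho g p i a` = existence probability of x-tuple `a` projected to the reduced
relation on the top `i` tuples (`i` is a 1-based count, tuples are 0-based). -/
noncomputable def rho {n m : ℕ} (g : Fin n → Fin m) (p : Fin n → ℝ) (i : ℕ) (a : Fin m) : ℝ :=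
  ∑ t ∈ Finset.univ.filter (fun t : Fin n => (t : ℕ) < i ∧ g t = a), p t

/-- Probability of a possible world `S` of the reduced relation on the top `i` tuples. -/
noncomputable def worldProbI {n m : ℕ} (g : Fin n → Fin m) (p : Fin n → ℝ) (i : ℕ)
    (S : Finset (Fin n)) : ℝ :=
  (∏ t ∈ S, p t) *
    ∏ a ∈ Finset.univ.filter (fun a : Fin m => ∀ t ∈ S, g t ≠ a), (1 - rho g p i a)

/-- `pij g p i j` = probability that tuple `i` is ranked at the `j`-th position
(`j ≥ 1`) across all possible worlds: the sum of `worldProb` over possible worlds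
containing `i` together with exactly `j - 1` higher-score tuples. -/
noncomputable def pij {n m : ℕ} (g : Fin n → Fin m) (p : Fin n → ℝ) (i : Fin n) (j : ℕ) : ℝ :=
  ∑ S ∈ Finset.univ.filter (fun S : Finset (Fin n) =>
      Set.InjOn g ↑S ∧ i ∈ S ∧ (S.filter (fun t => (t : ℕ) < (i : ℕ))).card = j - 1),
    worldProb g p S

/-- `tkp g p k i` = top-`k` probability of tuple `i`. -/
noncomputable def tkp {n m : ℕ} (g : Fin n → Fin m) (p : Fin n → ℝ) (k : ℕ) (i : Fin n) : ℝ :=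
  ∑ j ∈ Finset.Icc 1 k, pij g p i j

lemma PB_congr {α : Type*} [DecidableEq α] (A : Finset α) (q q' : α → ℝ)
    (h : ∀ a ∈ A, q a = q' a) (j : ℕ) : PB A q j = PB A q' j := by
  unfold PB
  refine Finset.sum_congr rfl fun T hT => ?_
  rw [mem_powersetCard] at hT
  congr 1
  · exact Finset.prod_congr rfl fun a ha => h a (hT.1 ha)
  · exact Finset.prod_congr rfl fun a ha => by rw [h a (mem_sdiff.mp ha).1]

lemma PB_nonneg {α : Type*} [DecidableEq α] (A : Finset α) (q : α → ℝ)
    (h0 : ∀ a ∈ A, 0 ≤ q a) (h1 : ∀ a ∈ A, q a ≤ 1) (j : ℕ) : 0 ≤ PB A q j := by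
  refine Finset.sum_nonneg fun T hT => ?_
  rw [mem_powersetCard] at hT
  refine mul_nonneg (Finset.prod_nonneg fun a ha => h0 a (hT.1 ha))
    (Finset.prod_nonneg fun a ha => ?_)
  have := (mem_sdiff.mp ha).1
  linarith [h1 a this]

lemma PB_insert_zero {α : Type*} [DecidableEq α] {a : α} {s : Finset α} (ha : a ∉ s)
    (q : α → ℝ) : PB (insert a s) q 0 = (1 - q a) * PB s q 0 := by
  unfold PB
  simp only [powersetCard_zero, Finset.sum_singleton, Finset.prod_empty, one_mul, sdiff_empty]
  rw [Finset.prod_insert ha]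

lemma PB_insert_succ {α : Type*} [DecidableEq α] {a : α} {s : Finset α} (ha : a ∉ s)
    (q : α → ℝ) (j : ℕ) :
    PB (insert a s) q (j + 1) = q a * PB s q j + (1 - q a) * PB s q (j + 1) := by
  unfold PB
  rw [show j + 1 = Nat.succ j from rfl, powersetCard_succ_insert ha]
  have hdisj : Disjoint (powersetCard (j+1) s) ((powersetCard j s).image (insert a)) := by
    rw [Finset.disjoint_left]
    intro T hT hT'
    rw [mem_powersetCard] at hT
    obtain ⟨U, hU, rfl⟩ := Finset.mem_image.mp hT'
    exact ha (hT.1 (Finset.mem_insert_self a U))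
  rw [Finset.sum_union hdisj]
  have h1 : ∑ T ∈ powersetCard (j+1) s, (∏ b ∈ T, q b) * ∏ b ∈ (insert a s) \ T, (1 - q b)
      = (1 - q a) * ∑ T ∈ powersetCard (j+1) s, (∏ b ∈ T, q b) * ∏ b ∈ s \ T, (1 - q b) := by
    rw [Finset.mul_sum]
    refine Finset.sum_congr rfl fun T hT => ?_
    rw [mem_powersetCard] at hT
    have haT : a ∉ T := fun h => ha (hT.1 h)
    have : (insert a s) \ T = insert a (s \ T) := by
      rw [Finset.insert_sdiff_of_notMem _ haT]
    rw [this, Finset.prod_insert (by simp [ha])]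
    ring
  have h2 : ∑ T ∈ (powersetCard j s).image (insert a),
        (∏ b ∈ T, q b) * ∏ b ∈ (insert a s) \ T, (1 - q b)
      = q a * ∑ T ∈ powersetCard j s, (∏ b ∈ T, q b) * ∏ b ∈ s \ T, (1 - q b) := by
    rw [Finset.sum_image, Finset.mul_sum]
    · refine Finset.sum_congr rfl fun T hT => ?_
      rw [mem_powersetCard] at hT
      have haT : a ∉ T := fun h => ha (hT.1 h)
      rw [Finset.prod_insert haT]
      have hss : (insert a s) \ (insert a T) = s \ T := by
        ext b
        simp only [Finset.mem_sdiff, Finset.mem_insert]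
        constructor
        · rintro ⟨hb1 | hb1, hb2⟩
          · exact (hb2 (Or.inl hb1)).elim
          · exact ⟨hb1, fun hb => hb2 (Or.inr hb)⟩
        · rintro ⟨hb1, hb2⟩
          exact ⟨Or.inr hb1, by rintro (rfl | hb); exacts [ha hb1, hb2 hb]⟩
      rw [hss]
      ring
    · intro T hT U hU hTU
      rw [Finset.mem_coe, mem_powersetCard] at hT hU
      have haT : a ∉ T := fun h => ha (hT.1 h)
      have haU : a ∉ U := fun h => ha (hU.1 h)
      have : T = (insert a T).erase a := by rw [Finset.erase_insert haT]
      rw [this, hTU, Finset.erase_insert haU]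
  rw [h1, h2]
  ring

lemma sum_PB_insert {α : Type*} [DecidableEq α] {a : α} {s : Finset α} (ha : a ∉ s)
    (q : α → ℝ) (k : ℕ) :
    ∑ j ∈ Finset.range (k + 1), PB (insert a s) q j
      = ∑ j ∈ Finset.range (k + 1), PB s q j - q a * PB s q k := by
  induction k with
  | zero => simp [PB_insert_zero ha]; ring
  | succ k ih =>
    rw [Finset.sum_range_succ, ih, PB_insert_succ ha,
      Finset.sum_range_succ (f := fun j => PB s q j) (n := k + 1)]
    ring


lemma rho_nonneg {n m : ℕ} (g : Fin n → Fin m) (p : Fin n → ℝ) (hp : ∀ t, 0 ≤ p t)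
    (i : ℕ) (a : Fin m) : 0 ≤ rho g p i a :=
  Finset.sum_nonneg fun t _ => hp t

lemma rho_le_one {n m : ℕ} (g : Fin n → Fin m) (p : Fin n → ℝ) (hp : ∀ t, 0 ≤ p t)
    (hsum : ∀ a : Fin m, ∑ t ∈ Finset.univ.filter (fun t : Fin n => g t = a), p t ≤ 1)
    (i : ℕ) (a : Fin m) : rho g p i a ≤ 1 := by
  refine le_trans ?_ (hsum a)
  apply Finset.sum_le_sum_of_subset_of_nonneg
  · intro t ht
    simp only [Finset.mem_filter] at ht ⊢
    exact ⟨ht.1, ht.2.2⟩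
  · exact fun t _ _ => hp t

lemma rho_succ_ne {n m : ℕ} (g : Fin n → Fin m) (p : Fin n → ℝ) (i : ℕ) (hi : i < n)
    (b : Fin m) (hb : b ≠ g ⟨i, hi⟩) : rho g p (i + 1) b = rho g p i b := by
  unfold rho
  congr 1
  ext t
  simp only [Finset.mem_filter, Finset.mem_univ, true_and]
  constructor
  · rintro ⟨ht1, ht2⟩
    rcases Nat.lt_succ_iff_lt_or_eq.mp ht1 with h | h
    · exact ⟨h, ht2⟩
    · exact absurd ht2.symm (by rw [show t = ⟨i, hi⟩ from Fin.ext h]; exact hb)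
  · rintro ⟨ht1, ht2⟩
    exact ⟨Nat.lt_succ_of_lt ht1, ht2⟩

lemma rho_le_succ {n m : ℕ} (g : Fin n → Fin m) (p : Fin n → ℝ) (hp : ∀ t, 0 ≤ p t)
    (i : ℕ) (b : Fin m) : rho g p i b ≤ rho g p (i + 1) b := by
  apply Finset.sum_le_sum_of_subset_of_nonneg
  · intro t ht
    simp only [Finset.mem_filter] at ht ⊢
    exact ⟨ht.1, Nat.lt_succ_of_lt ht.2.1, ht.2.2⟩
  · exact fun t _ _ => hp t


/-- The upper bounds `Σ_{j<k} r_{i,j}` are nonincreasing as the scan proceeds,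
where `r_{i,j} = PB_j(ρ_i(1),…,ρ_i(m))`. -/
theorem partial_sum_r_antitone (n m : ℕ) (g : Fin n → Fin m) (p : Fin n → ℝ)
    (hp : ∀ t, 0 ≤ p t)
    (hsum : ∀ a : Fin m, ∑ t ∈ Finset.univ.filter (fun t : Fin n => g t = a), p t ≤ 1)
    (i : ℕ) (hi : i < n) (k : ℕ) (hk : 1 ≤ k) :
    ∑ j ∈ Finset.range k, PB Finset.univ (rho g p (i + 1)) j
      ≤ ∑ j ∈ Finset.range k, PB Finset.univ (rho g p i) j := by
  obtain ⟨k', rfl⟩ : ∃ k', k = k' + 1 := ⟨k - 1, (Nat.succ_pred_eq_of_pos hk).symm⟩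
  set a0 : Fin m := g ⟨i, hi⟩ with ha0
  set s : Finset (Fin m) := Finset.univ.erase a0 with hs
  have ha : a0 ∉ s := Finset.notMem_erase _ _
  have huniv : (Finset.univ : Finset (Fin m)) = insert a0 s := by
    rw [hs, Finset.insert_erase (Finset.mem_univ a0)]
  rw [huniv, sum_PB_insert ha, sum_PB_insert ha]
  have hcong : ∀ j, PB s (rho g p (i+1)) j = PB s (rho g p i) j := fun j =>
    PB_congr _ _ _ (fun b hb => rho_succ_ne g p i hi b (Finset.ne_of_mem_erase hb)) j
  have hsumeq : ∑ j ∈ Finset.range (k'+1), PB s (rho g p (i+1)) j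
      = ∑ j ∈ Finset.range (k'+1), PB s (rho g p i) j :=
    Finset.sum_congr rfl fun j _ => hcong j
  rw [hsumeq, hcong k']
  have hPBnn : 0 ≤ PB s (rho g p i) k' :=
    PB_nonneg _ _ (fun b _ => rho_nonneg g p hp i b) (fun b _ => rho_le_one g p hp hsum i b) k'
  have hmono : rho g p i a0 ≤ rho g p (i+1) a0 := rho_le_succ g p hp i a0
  nlinarith
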